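/- Let H be a derivation with gapped ground state ψ with gap ≥ Δ > 0, realized in the GNS representation by a positive self-adjoint operator Ĥ annihilating the cyclic vector Ω, with spectrum in {0} ∪ [Δ, ∞) and 0 a simple eigenvalue with eigenvector Ω. Let w_Δ : ℝ → ℝ be an even integrable function with ∫ w_Δ(t) dt = 1 whose Fourier transform ŵ_Δ(ω) = ∫ w_Δ(t) e^{−iωt} dt vanishes for |ω| > Δ' with 0 < Δ' < Δ. Define I(A) := ∫_{−∞}^{∞} w_Δ(t) e^{itĤ} A e^{−itĤ} dt for bounded operators A. Then for all bounded A, B: ⟨Ω, I(A)·B·Ω⟩ = ⟨Ω, I(A)·Ω⟩·⟨Ω, B·Ω⟩. -/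

import Mathlib

open MeasureTheory

set_option linter.unusedSectionVars false
set_option maxHeartbeats 1600000

section AuxGNS

variable {H : Type*} [NormedAddCommGroup H] [InnerProductSpace ℂ H] [CompleteSpace H]

lemma aux_ker (Hop : H →L[ℂ] H) (Ω : H) (hΩ : ‖Ω‖ = 1)
    (hHΩ : Hop Ω = 0) (Δ : ℝ) (hΔ : 0 < Δ)
    (hgap : ∀ x : H, Δ * (‖x‖ ^ 2 - ‖(inner ℂ Ω x : ℂ)‖ ^ 2) ≤ (inner ℂ x (Hop x) : ℂ).re)
    (z : H) (hz : Hop z = 0) : z = (inner ℂ Ω z : ℂ) • Ω := by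
  have hΩΩ : (inner ℂ Ω Ω : ℂ) = 1 := by
    rw [inner_self_eq_norm_sq_to_K, hΩ]; norm_num
  set y := z - (inner ℂ Ω z : ℂ) • Ω with hy
  have h1 : (inner ℂ Ω y : ℂ) = 0 := by
    simp [hy, inner_sub_right, inner_smul_right, hΩΩ, hΩ]
  have h2 : Hop y = 0 := by
    simp [hy, map_sub, _root_.map_smul, hz, hHΩ]
  have h3 := hgap y
  rw [h2, h1] at h3
  simp only [inner_zero_right, Complex.zero_re, norm_zero] at h3
  have : ‖y‖ ^ 2 ≤ 0 := by nlinarith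
  have hy0 : y = 0 := by
    have := sq_nonneg ‖y‖
    have : ‖y‖ = 0 := by nlinarith
    simpa using this
  have : z - (inner ℂ Ω z : ℂ) • Ω = 0 := hy0
  linear_combination (norm := module) this

lemma aux_bound (Hop : H →L[ℂ] H) (hsa : IsSelfAdjoint Hop) (Ω : H) (hΩ : ‖Ω‖ = 1)
    (hHΩ : Hop Ω = 0) (Δ : ℝ)
    (hgap : ∀ x : H, Δ * (‖x‖ ^ 2 - ‖(inner ℂ Ω x : ℂ)‖ ^ 2) ≤ (inner ℂ x (Hop x) : ℂ).re)
    (μ : ℂ) (x : H) :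
    min (‖μ‖) (max |μ.im| (Δ - μ.re)) * ‖x‖ ≤ ‖μ • x - Hop x‖ := by
  have hadj : Hop.adjoint = Hop := hsa.adjoint_eq
  have hΩΩ : (inner ℂ Ω Ω : ℂ) = 1 := by
    rw [inner_self_eq_norm_sq_to_K, hΩ]; norm_num
  set c : ℂ := inner ℂ Ω x with hc
  set y : H := x - c • Ω with hy
  have hyΩ : (inner ℂ Ω y : ℂ) = 0 := by
    simp [hy, inner_sub_right, inner_smul_right, hΩΩ, hΩ, hc]
  have hxy : x = c • Ω + y := by rw [hy]; module
  have hHx : Hop x = Hop y := by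
    rw [hxy]; simp [_root_.map_smul, hHΩ]
  have hHyΩ : (inner ℂ Ω (Hop y) : ℂ) = 0 := by
    rw [← hadj, ContinuousLinearMap.adjoint_inner_right, hHΩ, inner_zero_left]
  have hdec : μ • x - Hop x = (μ * c) • Ω + (μ • y - Hop y) := by
    rw [hHx, hxy]; module
  have horth : (inner ℂ ((μ * c) • Ω) (μ • y - Hop y) : ℂ) = 0 := by
    rw [inner_smul_left, inner_sub_right, inner_smul_right, hyΩ, hHyΩ]; ring
  have hnorm1 : ‖μ • x - Hop x‖ ^ 2 = ‖(μ * c) • Ω‖ ^ 2 + ‖μ • y - Hop y‖ ^ 2 := by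
    have h := norm_add_sq_eq_norm_sq_add_norm_sq_of_inner_eq_zero _ _ horth
    rw [hdec]; simpa [pow_two] using h
  have hxorth : (inner ℂ (c • Ω) y : ℂ) = 0 := by
    rw [inner_smul_left, hyΩ]; ring
  have hnormx : ‖x‖ ^ 2 = ‖c‖ ^ 2 + ‖y‖ ^ 2 := by
    have h := norm_add_sq_eq_norm_sq_add_norm_sq_of_inner_eq_zero _ _ hxorth
    rw [hxy]
    have h2 : ‖c • Ω‖ = ‖c‖ := by rw [norm_smul, hΩ, mul_one]
    simpa [pow_two, h2] using h
  set v : H := μ • y - Hop y with hv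
  set c₁ : ℝ := max |μ.im| (Δ - μ.re) with hc₁
  have hc₁0 : 0 ≤ c₁ := le_max_of_le_left (abs_nonneg _)
  have hvbound : c₁ * ‖y‖ ≤ ‖v‖ := by
    rcases eq_or_ne y 0 with h0 | h0
    · simp [h0]
    have hyn : 0 < ‖y‖ := norm_pos_iff.mpr h0
    obtain ⟨ρ, hρ⟩ : ∃ ρ : ℂ, ρ = inner ℂ y (Hop y) := ⟨_, rfl⟩
    have hρconj : (starRingEnd ℂ) ρ = ρ := by
      rw [hρ, inner_conj_symm, ← hadj, ContinuousLinearMap.adjoint_inner_left, hadj]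
    have hρim : ρ.im = 0 := by
      have h := congrArg Complex.im hρconj
      simp only [Complex.conj_im] at h
      linarith
    have hρre : Δ * ‖y‖ ^ 2 ≤ ρ.re := by
      have h3 := hgap y
      rw [hyΩ, ← hρ] at h3
      simpa using h3
    have hq : (inner ℂ y v : ℂ) = μ * ((‖y‖ ^ 2 : ℝ) : ℂ) - ρ := by
      rw [hv, inner_sub_right, inner_smul_right, ← hρ, inner_self_eq_norm_sq_to_K]
      norm_cast
    have hqabs : ‖(inner ℂ y v : ℂ)‖ ≤ ‖y‖ * ‖v‖ := norm_inner_le_norm y v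
    have hqim : (inner ℂ y v : ℂ).im = μ.im * ‖y‖ ^ 2 := by
      rw [hq]; simp [Complex.sub_im, Complex.mul_im, hρim, ← Complex.ofReal_pow]
    have hqre : (inner ℂ y v : ℂ).re = μ.re * ‖y‖ ^ 2 - ρ.re := by
      rw [hq]; simp [Complex.sub_re, Complex.mul_re, ← Complex.ofReal_pow]
    have h1 : |μ.im| * ‖y‖ ^ 2 ≤ ‖(inner ℂ y v : ℂ)‖ := by
      calc |μ.im| * ‖y‖ ^ 2 = |(inner ℂ y v : ℂ).im| := by
            rw [hqim, abs_mul, abs_of_nonneg (sq_nonneg ‖y‖)]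
        _ ≤ ‖(inner ℂ y v : ℂ)‖ := Complex.abs_im_le_norm _
    have h2 : (Δ - μ.re) * ‖y‖ ^ 2 ≤ ‖(inner ℂ y v : ℂ)‖ := by
      have hr : (Δ - μ.re) * ‖y‖ ^ 2 ≤ -(inner ℂ y v : ℂ).re := by rw [hqre]; nlinarith
      calc (Δ - μ.re) * ‖y‖ ^ 2 ≤ -(inner ℂ y v : ℂ).re := hr
        _ ≤ |(inner ℂ y v : ℂ).re| := neg_le_abs _
        _ ≤ ‖(inner ℂ y v : ℂ)‖ := Complex.abs_re_le_norm _
    have hcs : ‖(inner ℂ y v : ℂ)‖ ≤ ‖y‖ * ‖v‖ := by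
      exact hqabs
    have hmax : c₁ * ‖y‖ ^ 2 ≤ ‖y‖ * ‖v‖ := by
      rw [hc₁]
      rcases max_cases |μ.im| (Δ - μ.re) with ⟨hm, _⟩ | ⟨hm, _⟩ <;> rw [hm] <;> linarith
    nlinarith
  set m : ℝ := min (‖μ‖) c₁ with hm
  have hm0 : 0 ≤ m := le_min (norm_nonneg μ) hc₁0
  have hΩc : ‖(μ * c) • Ω‖ = ‖μ‖ * ‖c‖ := by
    rw [norm_smul, hΩ, mul_one, norm_mul]
  have hmin1 : m ≤ ‖μ‖ := min_le_left _ _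
  have hmin2 : m ≤ c₁ := min_le_right _ _
  have hv0 : 0 ≤ ‖v‖ := norm_nonneg _
  have hy0 : 0 ≤ ‖y‖ := norm_nonneg _
  have hc0 : 0 ≤ ‖c‖ := norm_nonneg _
  have h5 : m * ‖y‖ ≤ ‖v‖ := le_trans (mul_le_mul_of_nonneg_right hmin2 hy0) hvbound
  have h6 : m * ‖c‖ ≤ ‖μ‖ * ‖c‖ := mul_le_mul_of_nonneg_right hmin1 hc0
  have hsq : (m * ‖x‖) ^ 2 ≤ ‖μ • x - Hop x‖ ^ 2 := by
    rw [hnorm1, hΩc, mul_pow, hnormx]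
    nlinarith [mul_nonneg hm0 hy0, mul_nonneg hm0 hc0,
      mul_self_le_mul_self (mul_nonneg hm0 hy0) h5,
      mul_self_le_mul_self (mul_nonneg hm0 hc0) h6]
  have h1 : 0 ≤ m * ‖x‖ := mul_nonneg hm0 (norm_nonneg _)
  have h7 := Real.sqrt_le_sqrt hsq
  rwa [Real.sqrt_sq h1, Real.sqrt_sq (norm_nonneg _)] at h7

lemma aux_spec (Hop : H →L[ℂ] H) (hsa : IsSelfAdjoint Hop) (Ω : H) (hΩ : ‖Ω‖ = 1)
    (hHΩ : Hop Ω = 0) (Δ : ℝ)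
    (hgap : ∀ x : H, Δ * (‖x‖ ^ 2 - ‖(inner ℂ Ω x : ℂ)‖ ^ 2) ≤ (inner ℂ x (Hop x) : ℂ).re)
    (z : ℂ) (hz : z ∈ spectrum ℂ Hop) : z = 0 ∨ (z.im = 0 ∧ Δ ≤ z.re) := by
  by_contra hcon
  push_neg at hcon
  obtain ⟨hz0, hz1⟩ := hcon
  set c₁ : ℝ := max |z.im| (Δ - z.re) with hc₁
  have hc₁pos : 0 < c₁ := by
    rcases eq_or_ne z.im 0 with him | him
    · exact lt_max_of_lt_right (by linarith [hz1 him])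
    · exact lt_max_of_lt_left (abs_pos.mpr him)
  set m : ℝ := min (‖z‖) c₁ with hm
  have hmpos : 0 < m := lt_min (norm_pos_iff.mpr hz0) hc₁pos
  set M : H →L[ℂ] H := algebraMap ℂ (H →L[ℂ] H) z - Hop with hM
  have hMapp : ∀ x : H, M x = z • x - Hop x := by
    intro x
    simp [hM, Algebra.algebraMap_eq_smul_one, ContinuousLinearMap.sub_apply]
  have hMb : ∀ x : H, m * ‖x‖ ≤ ‖M x‖ := by
    intro x; rw [hMapp]; exact aux_bound Hop hsa Ω hΩ hHΩ Δ hgap z x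
  have hMadj : M.adjoint = algebraMap ℂ (H →L[ℂ] H) (starRingEnd ℂ z) - Hop := by
    rw [← ContinuousLinearMap.star_eq_adjoint, hM, star_sub, hsa.star_eq,
      Algebra.algebraMap_eq_smul_one, Algebra.algebraMap_eq_smul_one, star_smul, star_one]
    rfl
  have hMadjb : ∀ x : H, m * ‖x‖ ≤ ‖M.adjoint x‖ := by
    intro x
    have h := aux_bound Hop hsa Ω hΩ hHΩ Δ hgap ((starRingEnd ℂ) z) x
    have h1 : ‖(starRingEnd ℂ) z‖ = ‖z‖ := Complex.norm_conj z
    have h2 : |((starRingEnd ℂ) z).im| = |z.im| := by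
      rw [Complex.conj_im, abs_neg]
    have h3 : ((starRingEnd ℂ) z).re = z.re := Complex.conj_re z
    rw [h1, h2, h3, ← hc₁, ← hm] at h
    calc m * ‖x‖ ≤ ‖(starRingEnd ℂ) z • x - Hop x‖ := h
      _ = ‖M.adjoint x‖ := by
        rw [hMadj]; simp [Algebra.algebraMap_eq_smul_one, ContinuousLinearMap.sub_apply]
  have hinj : Function.Injective M := by
    intro a b hab
    have h := hMb (a - b)
    rw [map_sub, hab, sub_self, norm_zero] at h
    have : ‖a - b‖ ≤ 0 := by nlinarith [norm_nonneg (a - b)]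
    rw [← sub_eq_zero]
    simpa using le_antisymm this (norm_nonneg _)
  have hanti : AntilipschitzWith (⟨m⁻¹, by positivity⟩ : NNReal) M :=
    M.antilipschitz_of_bound fun x => by
      show ‖x‖ ≤ m⁻¹ * ‖M x‖
      calc ‖x‖ = m⁻¹ * (m * ‖x‖) := by field_simp
        _ ≤ m⁻¹ * ‖M x‖ := mul_le_mul_of_nonneg_left (hMb x) (by positivity)
  have hclosed : IsClosed (Set.range M) := hanti.isClosed_range M.uniformContinuous
  set K : Submodule ℂ H := LinearMap.range (M : H →ₗ[ℂ] H) with hK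
  have hKclosed : IsClosed (K : Set H) := by
    have : (K : Set H) = Set.range M := by
      ext u; simp [hK, LinearMap.mem_range, Set.mem_range]
    rw [this]; exact hclosed
  have : CompleteSpace K := hKclosed.completeSpace_coe
  have hKtop : K = ⊤ := by
    rw [← Submodule.orthogonal_eq_bot_iff]
    rw [Submodule.eq_bot_iff]
    intro u hu
    have hMu : M.adjoint u = 0 := by
      apply ext_inner_left ℂ
      intro v
      rw [ContinuousLinearMap.adjoint_inner_right, inner_zero_right]
      exact hu (M v) (LinearMap.mem_range.mpr ⟨v, rfl⟩)
    have h := hMadjb u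
    rw [hMu, norm_zero] at h
    have : ‖u‖ ≤ 0 := by nlinarith [norm_nonneg u]
    simpa using le_antisymm this (norm_nonneg _)
  have hsurj : Function.Surjective M := by
    exact (LinearMap.range_eq_top (f := (M : H →ₗ[ℂ] H))).mp hKtop
  have hunit : IsUnit M := ContinuousLinearMap.isUnit_iff_bijective.mpr ⟨hinj, hsurj⟩
  exact (spectrum.mem_iff.mp hz) hunit

lemma aux_skew (Hop : H →L[ℂ] H) (hsa : IsSelfAdjoint Hop) (t : ℝ) :
    ((t : ℂ) • (Complex.I • Hop)) ∈ skewAdjoint (H →L[ℂ] H) := by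
  rw [skewAdjoint.mem_iff, star_smul, star_smul, hsa.star_eq, Complex.star_def,
    Complex.conj_ofReal, Complex.conj_I, neg_smul, smul_neg]

lemma aux_star_arg (Hop : H →L[ℂ] H) (hsa : IsSelfAdjoint Hop) (t : ℝ) :
    star ((t : ℂ) • (Complex.I • Hop)) = ((-t : ℝ) : ℂ) • (Complex.I • Hop) := by
  have h := aux_skew Hop hsa t
  rw [skewAdjoint.mem_iff] at h
  rw [h]; push_cast; rw [neg_smul]

lemma aux_U_mem (Hop : H →L[ℂ] H) (hsa : IsSelfAdjoint Hop) (t : ℝ) :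
    NormedSpace.exp ((t : ℂ) • (Complex.I • Hop)) ∈ unitary (H →L[ℂ] H) :=
  by
  let +nondep : NormedAlgebra ℚ (H →L[ℂ] H) := .restrictScalars ℚ ℂ (H →L[ℂ] H)
  exact NormedSpace.exp_mem_unitary_of_mem_skewAdjoint (aux_skew Hop hsa t)

lemma aux_U_star (Hop : H →L[ℂ] H) (hsa : IsSelfAdjoint Hop) (t : ℝ) :
    star (NormedSpace.exp ((t : ℂ) • (Complex.I • Hop)))
      = NormedSpace.exp (((-t : ℝ) : ℂ) • (Complex.I • Hop)) := by
  rw [NormedSpace.star_exp, aux_star_arg Hop hsa t]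

lemma aux_U_apply_Omega (Hop : H →L[ℂ] H) (Ω : H) (hHΩ : Hop Ω = 0) (t : ℝ) :
    NormedSpace.exp ((t : ℂ) • (Complex.I • Hop)) Ω = Ω := by
  set X : H →L[ℂ] H := (t : ℂ) • (Complex.I • Hop) with hX
  have hXΩ : X Ω = 0 := by
    rw [hX]; simp [ContinuousLinearMap.smul_apply, hHΩ]
  have hXn : ∀ n : ℕ, n ≠ 0 → (X ^ n) Ω = 0 := by
    intro n hn
    obtain ⟨k, rfl⟩ := Nat.exists_eq_succ_of_ne_zero hn
    rw [pow_succ, ContinuousLinearMap.mul_apply, hXΩ, map_zero]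
  rw [NormedSpace.exp_eq_tsum ℂ]
  have hsum := NormedSpace.expSeries_summable' (𝕂 := ℂ) X
  have happ := ((ContinuousLinearMap.apply ℂ H) Ω).map_tsum hsum
  simp only [ContinuousLinearMap.apply_apply] at happ
  rw [happ]
  rw [tsum_eq_single 0]
  · simp
  · intro n hn
    simp [ContinuousLinearMap.smul_apply, hXn n hn]

lemma aux_U_norm (Hop : H →L[ℂ] H) (hsa : IsSelfAdjoint Hop) (Ω : H) (hΩ : ‖Ω‖ = 1) (t : ℝ) :
    ‖NormedSpace.exp ((t : ℂ) • (Complex.I • Hop))‖ = 1 := by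
  have hΩ0 : Ω ≠ 0 := fun h => by simp [h] at hΩ
  have : Nontrivial H := nontrivial_of_ne Ω 0 hΩ0
  have : Nontrivial (H →L[ℂ] H) := by
    refine nontrivial_of_ne 1 0 fun h => hΩ0 ?_
    have := congrArg (fun T : H →L[ℂ] H => T Ω) h
    simpa using this
  exact CStarRing.norm_of_mem_unitary (aux_U_mem Hop hsa t)

lemma aux_normal_smul (Hop : H →L[ℂ] H) (hsa : IsSelfAdjoint Hop) (c : ℂ) :
    IsStarNormal (c • Hop) := by
  constructor
  rw [star_smul, hsa.star_eq]
  exact ((Commute.refl Hop).smul_left _).smul_right _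

noncomputable def PhiCLM (Hop : H →L[ℂ] H) (hn : IsStarNormal Hop) :
    C(spectrum ℂ Hop, ℂ) →L[ℂ] (H →L[ℂ] H) :=
  ⟨(cfcHom hn (R := ℂ)).toLinearMap, (cfcHom_isClosedEmbedding hn).continuous⟩

lemma PhiCLM_apply (Hop : H →L[ℂ] H) (hn : IsStarNormal Hop) (g : C(spectrum ℂ Hop, ℂ)) :
    PhiCLM Hop hn g = cfcHom hn (R := ℂ) g := rfl

noncomputable def expCM (Hop : H →L[ℂ] H) : C(ℝ, C(spectrum ℂ Hop, ℂ)) :=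
  ContinuousMap.curry
    ⟨fun p : ℝ × spectrum ℂ Hop => Complex.exp ((p.1 : ℂ) * Complex.I * (p.2 : ℂ)),
      by fun_prop⟩

lemma expCM_apply (Hop : H →L[ℂ] H) (s : ℝ) (z : spectrum ℂ Hop) :
    expCM Hop s z = Complex.exp ((s : ℂ) * Complex.I * (z : ℂ)) := rfl

lemma expCM_eq_U (Hop : H →L[ℂ] H) (hsa : IsSelfAdjoint Hop) (hn : IsStarNormal Hop) (s : ℝ) :
    cfcHom hn (R := ℂ) (expCM Hop s) = NormedSpace.exp ((s : ℂ) • (Complex.I • Hop)) := by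
  have hcont : ContinuousOn (fun ζ : ℂ => Complex.exp (((s : ℂ) * Complex.I) * ζ))
      (spectrum ℂ Hop) := (Complex.continuous_exp.comp (continuous_const.mul continuous_id)).continuousOn
  have e1 : cfc (fun ζ : ℂ => Complex.exp (((s : ℂ) * Complex.I) * ζ)) Hop
      = cfcHom hn (R := ℂ) (expCM Hop s) := by
    rw [cfc_apply _ Hop hn hcont]
    congr 1
  have e2 : cfc (fun ζ : ℂ => Complex.exp (((s : ℂ) * Complex.I) * ζ)) Hop
      = cfc Complex.exp (((s : ℂ) * Complex.I) • Hop) :=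
    cfc_comp_const_mul ((s : ℂ) * Complex.I) Complex.exp Hop
      Complex.continuous_exp.continuousOn hn
  have e3 : cfc Complex.exp (((s : ℂ) * Complex.I) • Hop)
      = NormedSpace.exp (((s : ℂ) * Complex.I) • Hop) :=
    CFC.complex_exp_eq_normedSpace_exp (aux_normal_smul Hop hsa _)
  have e4 : ((s : ℂ) * Complex.I) • Hop = (s : ℂ) • (Complex.I • Hop) := by
    rw [smul_smul]
  rw [← e1, e2, e3, e4]

lemma aux_asm_smul {X : Type*} [NormedAddCommGroup X] [NormedSpace ℂ X] (w : ℝ → ℝ)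
    (hw : AEStronglyMeasurable w (volume : Measure ℝ)) (V : ℝ → X) (hV : Continuous V) :
    AEStronglyMeasurable (fun t => (w t : ℂ) • V t) (volume : Measure ℝ) := by
  have hsm : StronglyMeasurable (fun t : ℝ => ((hw.mk w) t : ℂ) • V t) :=
    (Complex.continuous_ofReal.comp_stronglyMeasurable hw.stronglyMeasurable_mk).smul
      hV.stronglyMeasurable
  refine hsm.aestronglyMeasurable.congr ?_
  filter_upwards [hw.ae_eq_mk] with t ht
  simp only [← ht]

end AuxGNS

/-- Let `Ĥ` be a positive self-adjoint operator annihilating the unit vector `Ω`, with a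
spectral gap `≥ Δ` above the simple ground state `Ω`.  Let `w_Δ` be an even integrable
function with `∫ w_Δ = 1` whose Fourier transform vanishes for `|ω| > Δ'` with
`0 < Δ' < Δ`, and let `I(A) = ∫ w_Δ(t) e^{itĤ} A e^{-itĤ} dt`.  Then
`⟨Ω, I(A) B Ω⟩ = ⟨Ω, I(A) Ω⟩ ⟨Ω, B Ω⟩` for all bounded operators `A`, `B`. -/
theorem stmt_17 {H : Type*} [NormedAddCommGroup H] [InnerProductSpace ℂ H]
    [CompleteSpace H]
    (Hop : H →L[ℂ] H) (hsa : IsSelfAdjoint Hop)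
    (Ω : H) (hΩ : ‖Ω‖ = 1) (hHΩ : Hop Ω = 0)
    (Δ Δ' : ℝ) (hΔ' : 0 < Δ') (hΔ'Δ : Δ' < Δ)
    (hgap : ∀ x : H, Δ * (‖x‖ ^ 2 - ‖(inner ℂ Ω x : ℂ)‖ ^ 2) ≤ (inner ℂ x (Hop x) : ℂ).re)
    (w : ℝ → ℝ) (hw_int : Integrable w)
    (hw_even : ∀ t : ℝ, w (-t) = w t)
    (hw_norm : (∫ t : ℝ, w t) = 1)
    (hw_fourier : ∀ ω : ℝ, Δ' < |ω| →
      (∫ t : ℝ, (w t : ℂ) * Complex.exp (-Complex.I * ω * t)) = 0)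
    (U : ℝ → (H →L[ℂ] H))
    (hU : ∀ t : ℝ, U t = NormedSpace.exp ((t : ℂ) • (Complex.I • Hop)))
    (I : (H →L[ℂ] H) → (H →L[ℂ] H))
    (hI : ∀ A : H →L[ℂ] H, I A = ∫ t : ℝ, (w t : ℂ) • (U t * A * U (-t)))
    (A B : H →L[ℂ] H) :
    (inner ℂ Ω ((I A * B) Ω) : ℂ) = (inner ℂ Ω ((I A) Ω) : ℂ) * (inner ℂ Ω (B Ω) : ℂ) := by

  have hΔpos : 0 < Δ := hΔ'.trans hΔ'Δ
  have hn : IsStarNormal Hop := hsa.isStarNormal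
  -- facts about U
  have hUnorm : ∀ t, ‖U t‖ = 1 := fun t => by
    rw [hU t]; exact aux_U_norm Hop hsa Ω hΩ t
  have hUstar : ∀ t, star (U t) = U (-t) := fun t => by
    rw [hU t, hU (-t)]; exact_mod_cast aux_U_star Hop hsa t
  have hUΩ : ∀ t, U t Ω = Ω := fun t => by
    rw [hU t]; exact aux_U_apply_Omega Hop Ω hHΩ t
  have hUcont : Continuous U := by
    have hfe : U = fun t : ℝ => NormedSpace.exp ((t : ℂ) • (Complex.I • Hop)) := funext hU
    rw [hfe]
    let +nondep : NormedAlgebra ℚ (H →L[ℂ] H) := .restrictScalars ℚ ℂ (H →L[ℂ] H)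
    exact NormedSpace.exp_continuous.comp (Complex.continuous_ofReal.smul continuous_const)
  have hUinner : ∀ (t : ℝ) (v : H), (inner ℂ Ω (U t v) : ℂ) = inner ℂ Ω v := by
    intro t v
    have h := ContinuousLinearMap.adjoint_inner_right (U (-t)) Ω v
    rw [← ContinuousLinearMap.star_eq_adjoint, hUstar (-t), neg_neg, hUΩ (-t)] at h
    exact h
  -- integrability
  have hwC : AEStronglyMeasurable (fun t : ℝ => ((w t : ℝ) : ℂ)) volume :=
    Complex.continuous_ofReal.comp_aestronglyMeasurable hw_int.aestronglyMeasurable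
  have hi1 : Integrable (fun t : ℝ => (w t : ℂ) • (U t * A * U (-t))) volume := by
    apply Integrable.mono' (hw_int.norm.const_mul ‖A‖)
    · exact aux_asm_smul w hw_int.aestronglyMeasurable _
        ((hUcont.mul continuous_const).mul (hUcont.comp continuous_neg))
    · refine Filter.Eventually.of_forall fun t => ?_
      rw [norm_smul, Complex.norm_real]
      have h1 : ‖U t * A * U (-t)‖ ≤ ‖U t * A‖ * ‖U (-t)‖ := norm_mul_le _ _
      have h2 : ‖U t * A‖ ≤ ‖U t‖ * ‖A‖ := norm_mul_le _ _
      rw [hUnorm t, hUnorm (-t), one_mul, mul_one] at *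
      calc |w t| * ‖U t * A * U (-t)‖ ≤ |w t| * ‖A‖ := by
            apply mul_le_mul_of_nonneg_left (h1.trans h2) (abs_nonneg _)
        _ = ‖A‖ * |w t| := mul_comm _ _
  have hi2 : Integrable (fun t : ℝ => (w t : ℂ) • U (-t)) volume := by
    apply Integrable.mono' hw_int.norm
    · exact aux_asm_smul w hw_int.aestronglyMeasurable _ (hUcont.comp continuous_neg)
    · refine Filter.Eventually.of_forall fun t => ?_
      rw [norm_smul, Complex.norm_real, hUnorm (-t), mul_one]
  -- the averaged operator
  set Top : H →L[ℂ] H := ∫ t : ℝ, (w t : ℂ) • U (-t) with hTopDef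
  -- C(spectrum) valued integrand
  set F : ℝ → C(spectrum ℂ Hop, ℂ) := fun t => (w t : ℂ) • expCM Hop (-t) with hF
  have hexpCMnorm : ∀ (s : ℝ) (z : spectrum ℂ Hop), ‖expCM Hop s z‖ ≤ 1 := by
    intro s z
    have him : (z : ℂ).im = 0 := by
      rcases aux_spec Hop hsa Ω hΩ hHΩ Δ hgap (z : ℂ) z.2 with h | h
      · rw [h]; rfl
      · exact h.1
    rw [expCM_apply, Complex.norm_exp]
    have : ((s : ℂ) * Complex.I * (z : ℂ)).re = 0 := by
      simp [Complex.mul_re, Complex.mul_im, him]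
    rw [this, Real.exp_zero]
  have hiF : Integrable F volume := by
    apply Integrable.mono' hw_int.norm
    · exact aux_asm_smul w hw_int.aestronglyMeasurable _
        ((expCM Hop).continuous.comp continuous_neg)
    · refine Filter.Eventually.of_forall fun t => ?_
      show ‖(w t : ℂ) • expCM Hop (-t)‖ ≤ |w t|
      rw [ContinuousMap.norm_le _ (abs_nonneg _)]
      intro z
      rw [ContinuousMap.smul_apply, norm_smul, Complex.norm_real]
      calc |w t| * ‖expCM Hop (-t) z‖ ≤ |w t| * 1 :=
            mul_le_mul_of_nonneg_left (hexpCMnorm (-t) z) (abs_nonneg _)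
        _ = |w t| := mul_one _
  -- Top = Φ (∫ F)
  have hΦF : ∀ t : ℝ, PhiCLM Hop hn (F t) = (w t : ℂ) • U (-t) := by
    intro t
    show PhiCLM Hop hn ((w t : ℂ) • expCM Hop (-t)) = (w t : ℂ) • U (-t)
    rw [_root_.map_smul, PhiCLM_apply, expCM_eq_U Hop hsa hn (-t), hU (-t)]
  have hTop : Top = PhiCLM Hop hn (∫ t : ℝ, F t) := by
    rw [hTopDef, ← ContinuousLinearMap.integral_comp_comm _ hiF]
    congr 1
    funext t
    rw [hΦF t]
  -- the function id * ∫F vanishes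
  have hmul0 : ContinuousMap.restrict (spectrum ℂ Hop) (ContinuousMap.id ℂ) * (∫ t : ℝ, F t)
      = 0 := by
    ext z
    have heval : (∫ t : ℝ, F t) z = ∫ t : ℝ, (F t) z := by
      have h := (ContinuousMap.evalCLM ℂ z).integral_comp_comm hiF
      exact h.symm
    have hFz : ∀ t : ℝ, (F t) z = (w t : ℂ) * Complex.exp (((-t : ℝ) : ℂ) * Complex.I * (z : ℂ)) :=
      fun t => rfl
    simp only [ContinuousMap.mul_apply, ContinuousMap.restrict_apply, ContinuousMap.id_apply,
      ContinuousMap.zero_apply]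
    rcases aux_spec Hop hsa Ω hΩ hHΩ Δ hgap (z : ℂ) z.2 with h | h
    · rw [h, zero_mul]
    · obtain ⟨r, hr⟩ : ∃ r : ℝ, (z : ℂ) = (r : ℂ) := ⟨(z : ℂ).re, Complex.ext rfl (by simp [h.1])⟩
      have hrre : (z : ℂ).re = r := by rw [hr]; simp
      have hint : (∫ t : ℝ, (F t) z) = ∫ t : ℝ, (w t : ℂ) * Complex.exp (-Complex.I * r * t) := by
        congr 1
        funext t
        rw [hFz t, hr]
        have harg : ((-t : ℝ) : ℂ) * Complex.I * (r : ℂ) = -Complex.I * (r : ℂ) * (t : ℂ) := by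
          push_cast
          ring
        rw [harg]
      have hgt : Δ' < |r| := by
        have h2 : Δ ≤ r := hrre ▸ h.2
        rw [abs_of_nonneg (le_trans hΔpos.le h2)]
        linarith
      rw [heval, hint, hw_fourier r hgt, mul_zero]
  have hHopTop : Hop * Top = 0 := by
    have hid := cfcHom_id (R := ℂ) hn
    calc Hop * Top
        = cfcHom hn (ContinuousMap.restrict (spectrum ℂ Hop) (ContinuousMap.id ℂ))
          * cfcHom hn (R := ℂ) (∫ t : ℝ, F t) := by rw [hTop, PhiCLM_apply, hid]
      _ = cfcHom hn (ContinuousMap.restrict (spectrum ℂ Hop) (ContinuousMap.id ℂ)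
          * ∫ t : ℝ, F t) := (map_mul _ _ _).symm
      _ = 0 := by rw [hmul0, map_zero]
  have hTopKer : ∀ x : H, Hop (Top x) = 0 := by
    intro x
    rw [← ContinuousLinearMap.mul_apply, hHopTop, ContinuousLinearMap.zero_apply]
  -- inner ℂ products with Ω
  have hTopInner : ∀ x : H, (inner ℂ Ω (Top x) : ℂ) = inner ℂ Ω x := by
    intro x
    have happ : ∀ T : H →L[ℂ] H, ((innerSL ℂ Ω).comp (ContinuousLinearMap.apply ℂ H x)) T
        = inner ℂ Ω (T x) := fun T => rfl
    rw [hTopDef, ← happ, ← ContinuousLinearMap.integral_comp_comm _ hi2]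
    have : (fun t : ℝ => ((innerSL ℂ Ω).comp (ContinuousLinearMap.apply ℂ H x))
        ((w t : ℂ) • U (-t))) = fun t : ℝ => (w t : ℂ) * (inner ℂ Ω x : ℂ) := by
      funext t
      rw [_root_.map_smul, happ, smul_eq_mul, hUinner (-t) x]
    have hwi : (∫ t : ℝ, ((w t : ℝ) : ℂ)) = (((∫ t : ℝ, w t) : ℝ) : ℂ) := integral_ofReal
    rw [this, integral_mul_const, hwi, hw_norm]
    norm_num
  have hkey : ∀ x : H, (inner ℂ Ω ((I A) x) : ℂ) = inner ℂ Ω x * inner ℂ Ω (A Ω) := by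
    intro x
    have happ1 : ∀ T : H →L[ℂ] H, ((innerSL ℂ Ω).comp (ContinuousLinearMap.apply ℂ H x)) T
        = inner ℂ Ω (T x) := fun T => rfl
    have happ2 : ∀ T : H →L[ℂ] H, (((innerSL ℂ Ω).comp A).comp (ContinuousLinearMap.apply ℂ H x)) T
        = inner ℂ Ω (A (T x)) := fun T => rfl
    have step1 : (inner ℂ Ω ((I A) x) : ℂ) = ∫ t : ℝ, (w t : ℂ) * inner ℂ Ω (A (U (-t) x)) := by
      rw [hI A, ← happ1, ← ContinuousLinearMap.integral_comp_comm _ hi1]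
      congr 1
      funext t
      rw [_root_.map_smul, happ1, smul_eq_mul, ContinuousLinearMap.mul_apply,
        ContinuousLinearMap.mul_apply, hUinner t (A (U (-t) x))]
    have step2 : (inner ℂ Ω (A (Top x)) : ℂ) = ∫ t : ℝ, (w t : ℂ) * inner ℂ Ω (A (U (-t) x)) := by
      rw [hTopDef, ← happ2, ← ContinuousLinearMap.integral_comp_comm _ hi2]
      congr 1
      funext t
      rw [_root_.map_smul, happ2, smul_eq_mul]
    have step3 : Top x = (inner ℂ Ω x : ℂ) • Ω := by
      have h := aux_ker Hop Ω hΩ hHΩ Δ hΔpos hgap (Top x) (hTopKer x)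
      rw [hTopInner x] at h
      exact h
    rw [step1, ← step2, step3, _root_.map_smul, inner_smul_right]
  have hΩΩ : (inner ℂ Ω Ω : ℂ) = 1 := by
    rw [inner_self_eq_norm_sq_to_K, hΩ]; norm_num
  rw [ContinuousLinearMap.mul_apply, hkey (B Ω), hkey Ω, hΩΩ, one_mul]
  ring
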